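/- Let θ ≤ 1/4 and let a₁ > 0, a₀ ≥ 0, σ > 0 be real numbers with σ ≠ σ₀ := 2a₁θ/(1 - 2a₀θ) (when 2a₀θ ≠ 1). Define γ(0) = 1 + (a₁ + a₀σ)/d(0) where d(0) = (σ - σ₀)(1 - 2a₀θ). Then |γ(0)| > 1; more precisely γ(0) > 1 if d(0) > 0 and γ(0) < -1 if d(0) < 0. If 2a₀θ = 1 then γ(0) = 1 - a₀ - a₀²σ/a₁ < -1. -/

import Mathlib

/-- sign properties of γ(0) for the characteristic equation. -/
theorem stmt_0 (θ a₁ a₀ σ : ℝ) (hθ : θ ≤ 1/4) (ha₁ : 0 < a₁) (ha₀ : 0 ≤ a₀)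
    (hσ : 0 < σ) :
    ((2*a₀*θ ≠ 1 → σ ≠ 2*a₁*θ/(1 - 2*a₀*θ) →
      (|1 + (a₁ + a₀*σ)/((σ - 2*a₁*θ/(1 - 2*a₀*θ))*(1 - 2*a₀*θ))| > 1 ∧
       ((σ - 2*a₁*θ/(1 - 2*a₀*θ))*(1 - 2*a₀*θ) > 0 →
          1 + (a₁ + a₀*σ)/((σ - 2*a₁*θ/(1 - 2*a₀*θ))*(1 - 2*a₀*θ)) > 1) ∧
       ((σ - 2*a₁*θ/(1 - 2*a₀*θ))*(1 - 2*a₀*θ) < 0 →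
          1 + (a₁ + a₀*σ)/((σ - 2*a₁*θ/(1 - 2*a₀*θ))*(1 - 2*a₀*θ)) < -1)))
     ∧ (2*a₀*θ = 1 → 1 - a₀ - a₀^2*σ/a₁ < -1)) := by
  constructor
  · intro h1 h2
    have hu : (1 - 2*a₀*θ) ≠ 0 := by intro h; apply h1; linarith
    set d := (σ - 2*a₁*θ/(1 - 2*a₀*θ))*(1 - 2*a₀*θ) with hd
    have hdne : d ≠ 0 := mul_ne_zero (sub_ne_zero.mpr h2) hu
    have hd2 : d = σ*(1 - 2*a₀*θ) - 2*a₁*θ := by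
      rw [hd, sub_mul, div_mul_cancel₀ _ hu]
    have hN : 0 < a₁ + a₀*σ := by positivity
    have hpos : d > 0 → 1 + (a₁ + a₀*σ)/d > 1 := by
      intro h
      have := div_pos hN h
      linarith
    have hneg : d < 0 → 1 + (a₁ + a₀*σ)/d < -1 := by
      intro h
      have hlt : (a₁ + a₀*σ)/d < -2 := by
        rw [div_lt_iff_of_neg h]
        nlinarith [hd2, mul_nonneg ha₀ hσ.le]
      linarith
    refine ⟨?_, hpos, hneg⟩
    rcases hdne.lt_or_gt with h | h
    · have := hneg h
      rw [abs_of_neg (by linarith)]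
      linarith
    · have := hpos h
      rw [abs_of_pos (by linarith)]
      linarith
  · intro h
    have hθpos : 0 < θ := by
      by_contra hc
      push_neg at hc
      nlinarith
    have ha2 : 2 ≤ a₀ := by
      nlinarith [mul_nonneg ha₀ (by linarith : (0:ℝ) ≤ 1/2 - 2*θ)]
    have hq : 0 < a₀^2*σ/a₁ := by positivity
    linarith
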